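/- Let a, s be rational numbers with s ≠ 0 and s⁴ + 12a ≠ 0, and set X₂ = (1/4)·(s¹⁶ − 464s¹²a + 1632s⁸a² + 768a³s⁴ + 256a⁴) / (s⁴(s⁴ + 12a)²). Then there exists a rational number V such that V² = X₂³ + 4aX₂² − 32s⁴aX₂ + 64as⁸. -/

import Mathlib

theorem stmt_10 (a s : ℚ) (hs : s ≠ 0) (h : s ^ 4 + 12 * a ≠ 0)
    (X₂ : ℚ)
    (hX : X₂ = 1 / 4 * (s ^ 16 - 464 * s ^ 12 * a + 1632 * s ^ 8 * a ^ 2 + 768 * a ^ 3 * s ^ 4 +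
      256 * a ^ 4) / (s ^ 4 * (s ^ 4 + 12 * a) ^ 2)) :
    ∃ V : ℚ, V ^ 2 = X₂ ^ 3 + 4 * a * X₂ ^ 2 - 32 * s ^ 4 * a * X₂ + 64 * a * s ^ 8 := by
  set L : ℚ := (3 * (s ^ 4 - 4 * a) ^ 2 + 8 * a * (s ^ 4 - 4 * a) - 32 * s ^ 4 * a) /
    (2 * (s ^ 6 + 12 * a * s ^ 2)) with hL
  refine ⟨L * ((s ^ 4 - 4 * a) - X₂) - (s ^ 6 + 12 * a * s ^ 2), ?_⟩
  have hy : s ^ 6 + 12 * a * s ^ 2 ≠ 0 := by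
    have : s ^ 6 + 12 * a * s ^ 2 = s ^ 2 * (s ^ 4 + 12 * a) := by ring
    rw [this]
    exact mul_ne_zero (pow_ne_zero 2 hs) h
  subst hX
  rw [hL]
  have h' : s ^ 4 + a * 12 ≠ 0 := by rwa [mul_comm a]
  field_simp
  ring
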